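/- For every M > 0, there exist independent, identically distributed ℤ-valued random variables X and Y with finite Shannon entropy (indeed with finite support) such that H(X−Y) − H(X+Y) > M. -/

import Mathlib

open MeasureTheory ProbabilityTheory

/-- Shannon entropy (in nats) of a discrete random variable `X` on the
probability space `(Ω, P)`: `H(X) = -∑ₛ P(X = s) log P(X = s)`. -/
noncomputable def shEnt {Ω S : Type*} [MeasurableSpace Ω] (P : Measure Ω) (X : Ω → S) : ℝ :=
  ∑' s : S, Real.negMulLog (P (X ⁻¹' {s})).toReal

open Finset Real
open scoped ENNReal

lemma digits_zero : ∀ (n : ℕ) (c : Fin n → ℤ), (∀ i, |c i| ≤ 6) →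
    (∑ i, c i * 7 ^ (i : ℕ)) = 0 → ∀ i, c i = 0 := by
  intro n
  induction n with
  | zero => intro c _ _ i; exact i.elim0
  | succ n ih =>
    intro c hc hsum
    rw [Fin.sum_univ_succ] at hsum
    have hrw : ∀ i : Fin n, c i.succ * 7 ^ ((i.succ : Fin (n+1)) : ℕ)
        = 7 * (c i.succ * 7 ^ (i : ℕ)) := by
      intro i; rw [Fin.val_succ, pow_succ]; ring
    rw [Finset.sum_congr rfl (fun i _ => hrw i), ← Finset.mul_sum] at hsum
    set S := ∑ i : Fin n, c i.succ * 7 ^ (i : ℕ) with hS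
    have h0 : c 0 = 0 := by
      refine Int.eq_zero_of_abs_lt_dvd (m := 7) ⟨-S, ?_⟩ ?_
      · simp at hsum; linarith [hsum]
      · calc |c 0| ≤ 6 := hc 0
          _ < 7 := by norm_num
    have hS0 : S = 0 := by
      have : (7:ℤ) * S = 0 := by simp [h0] at hsum; linarith
      linarith
    have htail := ih (fun i => c i.succ) (fun i => hc i.succ) hS0
    intro i
    refine Fin.cases h0 (fun j => htail j) i

lemma ent_pow (T : Finset ℤ) (q : ℤ → ℝ) (h1 : ∑ t ∈ T, q t = 1) :
    ∀ n : ℕ, ∑ d ∈ Fintype.piFinset (fun _ : Fin n => T), Real.negMulLog (∏ i, q (d i))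
      = n * ∑ t ∈ T, Real.negMulLog (q t) := by
  intro n
  induction n with
  | zero => simp
  | succ n ih =>
    have hbij : ∑ d ∈ Fintype.piFinset (fun _ : Fin (n+1) => T), Real.negMulLog (∏ i, q (d i))
        = ∑ p ∈ T ×ˢ Fintype.piFinset (fun _ : Fin n => T),
            Real.negMulLog (∏ i, q ((Fin.cons p.1 p.2 : Fin (n+1) → ℤ) i)) := by
      refine (Finset.sum_nbij' (fun p : ℤ × (Fin n → ℤ) => (Fin.cons p.1 p.2 : Fin (n+1) → ℤ))
        (fun d => (d 0, Fin.tail d)) ?_ ?_ ?_ ?_ ?_).symm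
      · rintro ⟨t, d⟩ hp
        simp only [Finset.mem_product, Fintype.mem_piFinset] at hp ⊢
        intro i
        refine Fin.cases ?_ (fun j => ?_) i
        · simpa using hp.1
        · simpa using hp.2 j
      · intro d hd
        simp only [Fintype.mem_piFinset] at hd
        simp only [Finset.mem_product, Fintype.mem_piFinset]
        exact ⟨hd 0, fun j => hd j.succ⟩
      · rintro ⟨t, d⟩ _
        simp [Fin.tail_cons]
      · intro d _
        simp [Fin.cons_self_tail]
      · rintro ⟨t, d⟩ _; rfl
    rw [hbij, Finset.sum_product]
    have hprod : ∀ (t : ℤ) (d : Fin n → ℤ),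
        (∏ i, q ((Fin.cons t d : Fin (n+1) → ℤ) i)) = q t * ∏ i, q (d i) := by
      intro t d
      rw [Fin.prod_univ_succ]
      simp
    have hsum1 : ∑ d ∈ Fintype.piFinset (fun _ : Fin n => T), ∏ i, q (d i) = 1 := by
      rw [Finset.sum_prod_piFinset]
      simp [h1]
    calc ∑ t ∈ T, ∑ d ∈ Fintype.piFinset (fun _ : Fin n => T),
          Real.negMulLog (∏ i, q ((Fin.cons t d : Fin (n+1) → ℤ) i))
        = ∑ t ∈ T, ∑ d ∈ Fintype.piFinset (fun _ : Fin n => T),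
            ((∏ i, q (d i)) * Real.negMulLog (q t) + q t * Real.negMulLog (∏ i, q (d i))) := by
          refine Finset.sum_congr rfl fun t _ => Finset.sum_congr rfl fun d _ => ?_
          rw [hprod, Real.negMulLog_mul]
      _ = (n+1) * ∑ t ∈ T, Real.negMulLog (q t) := by
          simp only [Finset.sum_add_distrib, ← Finset.sum_mul, ← Finset.mul_sum, hsum1, ih]
          rw [h1]
          ring
    push_cast
    ring


noncomputable def muU (n : ℕ) : Measure (Fin n → Fin 3) :=
  (PMF.uniformOfFintype (Fin n → Fin 3)).toMeasure

instance (n : ℕ) : IsProbabilityMeasure (muU n) :=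
  PMF.toMeasure.isProbabilityMeasure _

noncomputable def PU (n : ℕ) : Measure ((Fin n → Fin 3) × (Fin n → Fin 3)) :=
  (muU n).prod (muU n)

instance (n : ℕ) : IsProbabilityMeasure (PU n) := by
  unfold PU; infer_instance

lemma muU_singleton (n : ℕ) (f : Fin n → Fin 3) : muU n {f} = ((3 : ℝ≥0∞) ^ n)⁻¹ := by
  rw [muU, PMF.toMeasure_apply_singleton _ _ (measurableSet_singleton f),
    PMF.uniformOfFintype_apply]
  congr 1
  simp [Fintype.card_fun]

lemma PU_singleton (n : ℕ) (ω : (Fin n → Fin 3) × (Fin n → Fin 3)) :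
    PU n {ω} = ((3 : ℝ≥0∞) ^ n)⁻¹ * ((3 : ℝ≥0∞) ^ n)⁻¹ := by
  have h : ({ω} : Set _) = {ω.1} ×ˢ {ω.2} := by simp
  rw [PU, h, Measure.prod_prod, muU_singleton, muU_singleton]

lemma PU_finset (n : ℕ) (S : Finset ((Fin n → Fin 3) × (Fin n → Fin 3))) :
    PU n ↑S = S.card * (((3 : ℝ≥0∞) ^ n)⁻¹ * ((3 : ℝ≥0∞) ^ n)⁻¹) := by
  have h : (↑S : Set ((Fin n → Fin 3) × (Fin n → Fin 3))) = ⋃ ω ∈ S, {ω} := by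
    ext ω; simp
  have hd : (↑S : Set ((Fin n → Fin 3) × (Fin n → Fin 3))).PairwiseDisjoint
      (fun ω => ({ω} : Set ((Fin n → Fin 3) × (Fin n → Fin 3)))) := by
    intro x _ y _ hxy
    simp [Set.disjoint_singleton, hxy]
  rw [h, measure_biUnion_finset hd (fun ω _ => measurableSet_singleton ω)]
  rw [Finset.sum_congr rfl (fun ω _ => PU_singleton n ω), Finset.sum_const, nsmul_eq_mul]

lemma PU_finset_real (n : ℕ) (S : Finset ((Fin n → Fin 3) × (Fin n → Fin 3))) :
    (PU n ↑S).toReal = (S.card : ℝ) / 9 ^ n := by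
  rw [PU_finset]
  simp only [ENNReal.toReal_mul, ENNReal.toReal_inv, ENNReal.toReal_pow,
    ENNReal.toReal_natCast, ENNReal.toReal_ofNat]
  rw [div_eq_mul_inv]
  congr 1
  rw [← mul_inv]
  congr 1
  rw [← mul_pow]
  norm_num

lemma card_fiber (n : ℕ) (w : Fin 3 × Fin 3 → ℤ) (d : Fin n → ℤ) :
    (Finset.univ.filter
        (fun ω : (Fin n → Fin 3) × (Fin n → Fin 3) => ∀ i, w (ω.1 i, ω.2 i) = d i)).card
      = ∏ i, (Finset.univ.filter (fun ab : Fin 3 × Fin 3 => w ab = d i)).card := by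
  classical
  rw [← Fintype.card_piFinset]
  apply Finset.card_nbij' (fun ω => fun i => (ω.1 i, ω.2 i))
      (fun h => (fun i => (h i).1, fun i => (h i).2))
  · intro ω hω
    simp only [Finset.mem_coe, Finset.mem_filter, Finset.mem_univ, true_and] at hω
    simp only [Finset.mem_coe, Fintype.mem_piFinset, Finset.mem_filter, Finset.mem_univ, true_and]
    exact hω
  · intro h hh
    simp only [Finset.mem_coe, Fintype.mem_piFinset, Finset.mem_filter, Finset.mem_univ, true_and] at hh
    simp only [Finset.mem_coe, Finset.mem_filter, Finset.mem_univ, true_and]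
    exact hh
  · intro ω _; rfl
  · intro h _; rfl

lemma L_inj (n : ℕ) (T : Finset ℤ) (hT : ∀ s ∈ T, ∀ t ∈ T, |s - t| ≤ 6)
    {d e : Fin n → ℤ} (hd : ∀ i, d i ∈ T) (he : ∀ i, e i ∈ T)
    (h : ∑ i, d i * 7 ^ (i : ℕ) = ∑ i, e i * 7 ^ (i : ℕ)) : d = e := by
  have h0 : ∑ i, (d i - e i) * 7 ^ (i : ℕ) = 0 := by
    simp only [sub_mul, Finset.sum_sub_distrib, h, sub_self]
  have := digits_zero n (fun i => d i - e i) (fun i => hT _ (hd i) _ (he i)) h0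
  funext i
  have hi : d i - e i = 0 := this i
  linarith

theorem shEnt_digitwise (n : ℕ) (w : Fin 3 × Fin 3 → ℤ) (hw : ∀ a b, |w a - w b| ≤ 6) :
    shEnt (PU n) (fun ω => ∑ i, w (ω.1 i, ω.2 i) * 7 ^ (i : ℕ))
      = n * ∑ t ∈ Finset.image w Finset.univ,
          Real.negMulLog (((Finset.univ.filter (fun ab => w ab = t)).card : ℝ) / 9) := by
  classical
  set T : Finset ℤ := Finset.image w Finset.univ with hTdef
  have hT : ∀ s ∈ T, ∀ t ∈ T, |s - t| ≤ 6 := by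
    intro s hs t ht
    simp only [hTdef, Finset.mem_image, Finset.mem_univ, true_and] at hs ht
    obtain ⟨a, rfl⟩ := hs
    obtain ⟨b, rfl⟩ := ht
    exact hw a b
  set Z : (Fin n → Fin 3) × (Fin n → Fin 3) → ℤ :=
    fun ω => ∑ i, w (ω.1 i, ω.2 i) * 7 ^ (i : ℕ) with hZdef
  set L : (Fin n → ℤ) → ℤ := fun d => ∑ i, d i * 7 ^ (i : ℕ) with hLdef
  set Dn := Fintype.piFinset (fun _ : Fin n => T) with hDndef
  have hmemD : ∀ ω : (Fin n → Fin 3) × (Fin n → Fin 3),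
      (fun i => w (ω.1 i, ω.2 i)) ∈ Dn := by
    intro ω
    simp only [hDndef, Fintype.mem_piFinset, hTdef, Finset.mem_image, Finset.mem_univ, true_and]
    exact fun i => ⟨_, rfl⟩
  have hDT : ∀ d ∈ Dn, ∀ i : Fin n, d i ∈ T := by
    intro d hd
    simpa only [hDndef, Fintype.mem_piFinset] using hd
  -- step 1 : tsum to finite sum over image
  have h1 : shEnt (PU n) Z
      = ∑ z ∈ Dn.image L, Real.negMulLog ((PU n (Z ⁻¹' {z})).toReal) := by
    rw [shEnt]
    apply tsum_eq_sum
    intro z hz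
    have hempty : Z ⁻¹' {z} = ∅ := by
      ext ω
      simp only [Set.mem_preimage, Set.mem_singleton_iff, Set.mem_empty_iff_false, iff_false]
      intro hZω
      exact hz (Finset.mem_image.2 ⟨_, hmemD ω, hZω⟩)
    rw [hempty]
    simp
  rw [h1, Finset.sum_image (fun d hd e he hle => L_inj n T hT (hDT d hd) (hDT e he) hle)]
  -- step 3 : compute each fiber
  have h3 : ∀ d ∈ Dn, (PU n (Z ⁻¹' {L d})).toReal
      = ∏ i, (((Finset.univ.filter (fun ab : Fin 3 × Fin 3 => w ab = d i)).card : ℝ) / 9) := by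
    intro d hd
    have hfib : Z ⁻¹' {L d} = ↑(Finset.univ.filter
        (fun ω : (Fin n → Fin 3) × (Fin n → Fin 3) => ∀ i, w (ω.1 i, ω.2 i) = d i)) := by
      ext ω
      simp only [Set.mem_preimage, Set.mem_singleton_iff, Finset.coe_filter,
        Set.mem_setOf_eq, Finset.mem_univ, true_and]
      constructor
      · intro hω
        have := L_inj n T hT (hDT _ (hmemD ω)) (hDT d hd) hω
        exact fun i => congrFun this i
      · intro hω
        apply Finset.sum_congr rfl
        intro i _
        rw [hω i]
    rw [hfib, PU_finset_real, card_fiber]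
    push_cast
    rw [Finset.prod_div_distrib]
    congr 1
    rw [Finset.prod_const]
    simp
  rw [Finset.sum_congr rfl (fun d hd => by rw [h3 d hd])]
  have hq : ∑ t ∈ T, ((Finset.univ.filter (fun ab : Fin 3 × Fin 3 => w ab = t)).card : ℝ) / 9
      = 1 := by
    rw [← Finset.sum_div, ← Nat.cast_sum]
    have hcard : ∑ t ∈ T, (Finset.univ.filter (fun ab : Fin 3 × Fin 3 => w ab = t)).card = 9 := by
      rw [hTdef, ← Finset.card_eq_sum_card_image w Finset.univ]
      decide
    rw [hcard]
    norm_num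
  exact ent_pow T _ hq n
def vv : Fin 3 → ℤ := ![0, 1, 3]

def wd : Fin 3 × Fin 3 → ℤ := fun ab => vv ab.1 - vv ab.2

def ws : Fin 3 × Fin 3 → ℤ := fun ab => vv ab.1 + vv ab.2

noncomputable def enc (n : ℕ) : (Fin n → Fin 3) → ℤ := fun f => ∑ i, vv (f i) * 7 ^ (i : ℕ)

lemma Hnum :
    (∑ t ∈ Finset.image wd Finset.univ,
        Real.negMulLog (((Finset.univ.filter (fun ab => wd ab = t)).card : ℝ) / 9))
      - (∑ t ∈ Finset.image ws Finset.univ,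
        Real.negMulLog (((Finset.univ.filter (fun ab => ws ab = t)).card : ℝ) / 9))
      = (2 * Real.log 2 - Real.log 3) / 3 := by
  have hd : Finset.image wd Finset.univ = ({0, -1, -3, 1, -2, 3, 2} : Finset ℤ) := by decide
  have hs : Finset.image ws Finset.univ = ({0, 1, 3, 2, 4, 6} : Finset ℤ) := by decide
  rw [hd, hs]
  have cd0 : (Finset.univ.filter (fun ab => wd ab = (0:ℤ))).card = 3 := by decide
  have cd1 : (Finset.univ.filter (fun ab => wd ab = (-1:ℤ))).card = 1 := by decide
  have cd2 : (Finset.univ.filter (fun ab => wd ab = (-3:ℤ))).card = 1 := by decide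
  have cd3 : (Finset.univ.filter (fun ab => wd ab = (1:ℤ))).card = 1 := by decide
  have cd4 : (Finset.univ.filter (fun ab => wd ab = (-2:ℤ))).card = 1 := by decide
  have cd5 : (Finset.univ.filter (fun ab => wd ab = (3:ℤ))).card = 1 := by decide
  have cd6 : (Finset.univ.filter (fun ab => wd ab = (2:ℤ))).card = 1 := by decide
  have cs0 : (Finset.univ.filter (fun ab => ws ab = (0:ℤ))).card = 1 := by decide
  have cs1 : (Finset.univ.filter (fun ab => ws ab = (1:ℤ))).card = 2 := by decide
  have cs2 : (Finset.univ.filter (fun ab => ws ab = (3:ℤ))).card = 2 := by decide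
  have cs3 : (Finset.univ.filter (fun ab => ws ab = (2:ℤ))).card = 1 := by decide
  have cs4 : (Finset.univ.filter (fun ab => ws ab = (4:ℤ))).card = 2 := by decide
  have cs5 : (Finset.univ.filter (fun ab => ws ab = (6:ℤ))).card = 1 := by decide
  norm_num [Finset.sum_insert, Finset.mem_insert, Finset.mem_singleton,
    cd0, cd1, cd2, cd3, cd4, cd5, cd6, cs0, cs1, cs2, cs3, cs4, cs5, Real.negMulLog]
  have l9 : Real.log 9 = 2 * Real.log 3 := by
    rw [show (9:ℝ) = 3 ^ 2 by norm_num, Real.log_pow]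
    push_cast; ring
  have l19 : Real.log (1/9 : ℝ) = -(2 * Real.log 3) := by
    rw [one_div, Real.log_inv, l9]
  have l13 : Real.log (1/3 : ℝ) = -Real.log 3 := by
    rw [one_div, Real.log_inv]
  have l29 : Real.log (2/9 : ℝ) = Real.log 2 - 2 * Real.log 3 := by
    rw [Real.log_div (by norm_num) (by norm_num), l9]
  rw [l19, l13, l29]
  ring
/-- Lapidoth–Pete: for every `M > 0` there exist i.i.d. `ℤ`-valued
random variables `X, Y` with finite entropy (indeed finite support) such that
`H(X-Y) - H(X+Y) > M`. -/
theorem exists_iid_entropy_sub_gt_entropy_add (M : ℝ) (hM : 0 < M) :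
    ∃ (Ω : Type) (_ : MeasurableSpace Ω) (P : Measure Ω) (X Y : Ω → ℤ),
      IsProbabilityMeasure P ∧ Measurable X ∧ Measurable Y ∧
      IndepFun X Y P ∧ IdentDistrib X Y P P ∧
      (Set.range X).Finite ∧
      Summable (fun z : ℤ => Real.negMulLog (P (X ⁻¹' {z})).toReal) ∧
      shEnt P (fun ω => X ω - Y ω) - shEnt P (fun ω => X ω + Y ω) > M := by
  classical
  set c : ℝ := (2 * Real.log 2 - Real.log 3) / 3 with hcdef
  have hc : 0 < c := by
    have h34 : Real.log 3 < Real.log 4 := Real.log_lt_log (by norm_num) (by norm_num)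
    have h4 : Real.log 4 = 2 * Real.log 2 := by
      rw [show (4:ℝ) = 2 ^ 2 by norm_num, Real.log_pow]; push_cast; ring
    rw [hcdef]
    rw [h4] at h34
    linarith
  obtain ⟨n, hn⟩ := exists_nat_gt (M / c)
  have hnc : M < n * c := by
    rw [div_lt_iff₀ hc] at hn
    linarith
  refine ⟨(Fin n → Fin 3) × (Fin n → Fin 3), inferInstance, PU n,
    fun ω => enc n ω.1, fun ω => enc n ω.2, inferInstance, ?_, ?_, ?_, ?_, ?_, ?_, ?_⟩
  · exact (measurable_of_countable (enc n)).comp measurable_fst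
  · exact (measurable_of_countable (enc n)).comp measurable_snd
  · -- independence
    have hfs : IndepFun (Prod.fst) (Prod.snd) (PU n) := by
      rw [indepFun_iff_map_prod_eq_prod_map_map measurable_fst.aemeasurable
        measurable_snd.aemeasurable]
      have h1 : (fun ω : (Fin n → Fin 3) × (Fin n → Fin 3) => (ω.1, ω.2)) = id :=
        funext fun ω => rfl
      have h2 : Measure.map Prod.fst (PU n) = muU n := by
        rw [PU, Measure.map_fst_prod]; simp
      have h3 : Measure.map Prod.snd (PU n) = muU n := by
        rw [PU, Measure.map_snd_prod]; simp
      rw [h1, Measure.map_id, h2, h3, PU]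
    exact hfs.comp (measurable_of_countable (enc n)) (measurable_of_countable (enc n))
  · -- identically distributed
    have hfs : IdentDistrib (Prod.fst) (Prod.snd) (PU n) (PU n) :=
      { aemeasurable_fst := measurable_fst.aemeasurable
        aemeasurable_snd := measurable_snd.aemeasurable
        map_eq := by
          have h2 : Measure.map Prod.fst (PU n) = muU n := by
            rw [PU, Measure.map_fst_prod]; simp
          have h3 : Measure.map Prod.snd (PU n) = muU n := by
            rw [PU, Measure.map_snd_prod]; simp
          rw [h2, h3] }
    exact hfs.comp (measurable_of_countable (enc n))
  · exact Set.finite_range _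
  · -- summable
    apply summable_of_ne_finset_zero
      (s := Finset.image (fun ω : (Fin n → Fin 3) × (Fin n → Fin 3) => enc n ω.1) Finset.univ)
    intro z hz
    have hempty : (fun ω : (Fin n → Fin 3) × (Fin n → Fin 3) => enc n ω.1) ⁻¹' {z} = ∅ := by
      ext ω
      simp only [Set.mem_preimage, Set.mem_singleton_iff, Set.mem_empty_iff_false, iff_false]
      intro h
      exact hz (Finset.mem_image.2 ⟨ω, Finset.mem_univ ω, h⟩)
    rw [hempty]
    simp
  · -- the entropy gap
    have hwd : ∀ a b, |wd a - wd b| ≤ 6 := by decide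
    have hws : ∀ a b, |ws a - ws b| ≤ 6 := by decide
    have hXYd : (fun ω : (Fin n → Fin 3) × (Fin n → Fin 3) => enc n ω.1 - enc n ω.2)
        = fun ω => ∑ i : Fin n, wd (ω.1 i, ω.2 i) * 7 ^ (i : ℕ) := by
      funext ω
      simp only [enc, wd, sub_mul, Finset.sum_sub_distrib]
    have hXYs : (fun ω : (Fin n → Fin 3) × (Fin n → Fin 3) => enc n ω.1 + enc n ω.2)
        = fun ω => ∑ i : Fin n, ws (ω.1 i, ω.2 i) * 7 ^ (i : ℕ) := by
      funext ω
      simp only [enc, ws, add_mul, Finset.sum_add_distrib]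
    rw [hXYd, hXYs, shEnt_digitwise n wd hwd, shEnt_digitwise n ws hws, ← mul_sub, Hnum, ← hcdef]
    exact hnc
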